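/- The number of rooted labeled trees on n+1 vertices (trees on a fixed vertex set of size n+1 with one distinguished root) equals (n+1)^n. -/

import Mathlib

set_option linter.unusedSectionVars false
set_option linter.unusedVariables false
set_option linter.unusedSectionVars false
set_option linter.unusedVariables false

open Function Finset

variable {V : Type*} [Fintype V] [LinearOrder V]

/-- `f` is a rooted-tree parent function supported on `S`. -/
def TreeFun (S : Finset V) (f : V → V) : Prop :=
  (∀ v ∉ S, f v = v) ∧ ∃ r ∈ S, f r = r ∧ ∀ v ∈ S, ∃ k, f^[k] v = r

namespace TreeFun

variable {S : Finset V} {f : V → V} {r : V}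

structure Root (S : Finset V) (f : V → V) (r : V) : Prop where
  mem : r ∈ S
  fix : f r = r
  reach : ∀ v ∈ S, ∃ k, f^[k] v = r

theorem exists_root (h : TreeFun S f) : ∃ r, Root S f r := by
  obtain ⟨_, r, h1, h2, h3⟩ := h
  exact ⟨r, h1, h2, h3⟩

theorem nonempty (h : TreeFun S f) : S.Nonempty := by
  obtain ⟨r, hr⟩ := h.exists_root; exact ⟨r, hr.mem⟩

theorem outside (h : TreeFun S f) : ∀ v ∉ S, f v = v := h.1

/-- closure of `S` under `f`. -/
theorem mem_of_mem (h : TreeFun S f) (hr : Root S f r) {v : V} (hv : v ∈ S) : f v ∈ S := by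
  by_contra hfv
  obtain ⟨k, hk⟩ := hr.reach v hv
  have hfix : ∀ j, f^[j] (f v) = f v := by
    intro j
    induction j with
    | zero => rfl
    | succ j ih => rw [Function.iterate_succ_apply', ih, h.1 _ hfv]
  rcases k with _ | k
  · simp at hk; subst hk; exact hfv (by rw [hr.fix] at hfv ⊢; exact hv)
  · rw [Function.iterate_succ_apply, hfix k] at hk
    rw [hk] at hfv; exact hfv hr.mem

theorem iterate_mem (h : TreeFun S f) (hr : Root S f r) {v : V} (hv : v ∈ S) :
    ∀ j, f^[j] v ∈ S := by
  intro j
  induction j with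
  | zero => exact hv
  | succ j ih => rw [Function.iterate_succ_apply']; exact h.mem_of_mem hr ih

/-- no cycles: if an iterate returns, we are at the root (or did nothing). -/
theorem eq_root_of_iterate (h : TreeFun S f) (hr : Root S f r) {v : V} (hv : v ∈ S)
    {j : ℕ} (hj : 0 < j) (hcyc : f^[j] v = v) : v = r := by
  obtain ⟨m, hm⟩ := hr.reach v hv
  have hall : ∀ a, f^[a * j] v = v := by
    intro a
    induction a with
    | zero => simp
    | succ a ih => rw [Nat.succ_mul, Function.iterate_add_apply, hcyc, ih]
  have hle : m ≤ m * j := Nat.le_mul_of_pos_right m hj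
  have := hall m
  rw [show m * j = (m * j - m) + m by omega, Function.iterate_add_apply, hm,
    Function.iterate_fixed hr.fix] at this
  exact this.symm

theorem root_unique (h : TreeFun S f) (hr : Root S f r) {v : V} (hv : v ∈ S)
    (hfix : f v = v) : v = r :=
  h.eq_root_of_iterate hr hv Nat.one_pos (by simpa using hfix)

theorem apply_ne (h : TreeFun S f) (hr : Root S f r) {v : V} (hv : v ∈ S) (hvr : v ≠ r) :
    f v ≠ v := fun hfix => hvr (h.root_unique hr hv hfix)

/-- the root has a child if `S` has at least two elements -/
theorem exists_child (h : TreeFun S f) (hr : Root S f r) (h2 : 2 ≤ S.card) :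
    ∃ w ∈ S, w ≠ r ∧ f w = r := by
  obtain ⟨u, hu, hur⟩ : ∃ u ∈ S, u ≠ r := by
    obtain ⟨u, hu, w, hw, huw⟩ := Finset.one_lt_card.mp h2
    rcases eq_or_ne u r with h'' | h'
    · exact ⟨w, hw, by rw [← h'']; exact huw.symm⟩
    · exact ⟨u, hu, h'⟩
  have hex : ∃ k, f^[k] u = r := hr.reach u hu
  classical
  let k := Nat.find hex
  have hk : f^[k] u = r := Nat.find_spec hex
  have hkpos : 0 < k := by
    rcases Nat.eq_zero_or_pos k with h0 | h0
    · exfalso; apply hur; simpa [h0] using hk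
    · exact h0
  refine ⟨f^[k-1] u, h.iterate_mem hr hu _, ?_, ?_⟩
  · intro hcontra
    have : f^[k-1] u = r := hcontra
    exact Nat.find_min hex (by omega : k - 1 < k) this
  · have : f (f^[k-1] u) = f^[k - 1 + 1] u := (Function.iterate_succ_apply' f (k-1) u).symm
    rw [this, show k - 1 + 1 = k by omega]
    exact hk

/-- root is in the image -/
theorem root_mem_image (h : TreeFun S f) (hr : Root S f r) : r ∈ S.image f :=
  Finset.mem_image.mpr ⟨r, hr.mem, hr.fix⟩

theorem image_subset (h : TreeFun S f) (hr : Root S f r) : S.image f ⊆ S := by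
  intro x hx
  obtain ⟨v, hv, rfl⟩ := Finset.mem_image.mp hx
  exact h.mem_of_mem hr hv

/-- there is a childless non-root vertex when `2 ≤ S.card` -/
theorem leaves_nonempty (h : TreeFun S f) (hr : Root S f r) (h2 : 2 ≤ S.card) :
    (S \ S.image f).Nonempty := by
  rw [Finset.sdiff_nonempty]
  intro hsub
  have heq : S.image f = S := Finset.Subset.antisymm (h.image_subset hr) hsub
  have hinj : Set.InjOn f S := Finset.injOn_of_card_image_eq (by rw [heq])
  obtain ⟨w, hw, hwr, hfw⟩ := h.exists_child hr h2
  exact hwr (hinj hw hr.mem (by rw [hfw, hr.fix]))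

end TreeFun

set_option maxHeartbeats 1000000

section Pruf

variable {V : Type*} [Fintype V] [LinearOrder V]

theorem iterate_update_of_ne (g : V → V) (l a v : V) (hv : ∀ j, g^[j] v ≠ l) :
    ∀ j, (Function.update g l a)^[j] v = g^[j] v := by
  intro j
  induction j with
  | zero => rfl
  | succ j ih =>
      rw [Function.iterate_succ_apply', Function.iterate_succ_apply', ih,
        Function.update_of_ne (hv j)]

/-- Prüfer-style encoding of a rooted tree function. -/
def prufEncode (S : Finset V) (f : V → V) : List V :=
  if h : (S \ S.image f).Nonempty ∧ 2 ≤ S.card then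
    have hl : (S \ S.image f).min' h.1 ∈ S :=
      (Finset.mem_sdiff.mp ((S \ S.image f).min'_mem h.1)).1
    f ((S \ S.image f).min' h.1) ::
      prufEncode (S.erase ((S \ S.image f).min' h.1))
        (Function.update f ((S \ S.image f).min' h.1) ((S \ S.image f).min' h.1))
  else []
termination_by S.card
decreasing_by
  exact Finset.card_erase_lt_of_mem hl

/-- Prüfer-style decoding. -/
def prufDecode (S : Finset V) : List V → (V → V)
  | [] => id
  | a :: l =>
    if h : (S \ (a :: l).toFinset).Nonempty then
      Function.update (prufDecode (S.erase ((S \ (a :: l).toFinset).min' h)) l)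
        ((S \ (a :: l).toFinset).min' h) a
    else id

namespace TreeFun

variable {S : Finset V} {f : V → V} {r : V}

theorem leaf_spec (h : TreeFun S f) (hr : Root S f r) (h2 : 2 ≤ S.card) :
    ∃ hne : (S \ S.image f).Nonempty,
      (S \ S.image f).min' hne ∈ S ∧ (S \ S.image f).min' hne ∉ S.image f ∧
      (S \ S.image f).min' hne ≠ r := by
  have hne := h.leaves_nonempty hr h2
  have hmem := (S \ S.image f).min'_mem hne
  rw [Finset.mem_sdiff] at hmem
  exact ⟨hne, hmem.1, hmem.2, fun he => hmem.2 (he ▸ h.root_mem_image hr)⟩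

theorem no_child (h : TreeFun S f) {l : V} (hl : l ∉ S.image f) :
    ∀ w ∈ S, f w ≠ l := fun w hw he => hl (Finset.mem_image.mpr ⟨w, hw, he⟩)

theorem orbit_avoids (h : TreeFun S f) (hr : Root S f r) {l v : V} (hl : l ∉ S.image f)
    (hv : v ∈ S) (hvl : v ≠ l) : ∀ j, f^[j] v ≠ l := by
  intro j
  cases j with
  | zero => exact hvl
  | succ j =>
      rw [Function.iterate_succ_apply']
      exact h.no_child hl _ (h.iterate_mem hr hv j)

/-- Removing the minimal leaf keeps a tree function, with the same root. -/
theorem erase_leaf (h : TreeFun S f) (hr : Root S f r) {l : V} (hlS : l ∈ S)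
    (hl : l ∉ S.image f) :
    TreeFun (S.erase l) (Function.update f l l) ∧
      Root (S.erase l) (Function.update f l l) r := by
  have hlr : l ≠ r := fun he => hl (he ▸ h.root_mem_image hr)
  have key : ∀ v ∈ S.erase l, ∀ j, (Function.update f l l)^[j] v = f^[j] v := by
    intro v hv
    rw [Finset.mem_erase] at hv
    exact iterate_update_of_ne f l l v (h.orbit_avoids hr hl hv.2 hv.1)
  have hroot : Root (S.erase l) (Function.update f l l) r := by
    refine ⟨Finset.mem_erase.mpr ⟨hlr.symm, hr.mem⟩, ?_, ?_⟩
    · rw [Function.update_of_ne hlr.symm, hr.fix]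
    · intro v hv
      obtain ⟨k, hk⟩ := hr.reach v (Finset.mem_of_mem_erase hv)
      exact ⟨k, by rw [key v hv k]; exact hk⟩
  refine ⟨⟨?_, r, hroot.mem, hroot.fix, hroot.reach⟩, hroot⟩
  intro v hv
  rcases eq_or_ne v l with rfl | hvl
  · simp
  · rw [Function.update_of_ne hvl]
    exact h.outside v (fun hvS => hv (Finset.mem_erase.mpr ⟨hvl, hvS⟩))

theorem encode_cons (h : TreeFun S f) (hr : Root S f r) (h2 : 2 ≤ S.card) :
    ∃ hne : (S \ S.image f).Nonempty,
      prufEncode S f = f ((S \ S.image f).min' hne) ::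
        prufEncode (S.erase ((S \ S.image f).min' hne))
          (Function.update f ((S \ S.image f).min' hne) ((S \ S.image f).min' hne)) := by
  obtain ⟨hne, _⟩ := h.leaf_spec hr h2
  refine ⟨hne, ?_⟩
  rw [prufEncode, dif_pos ⟨hne, h2⟩]

theorem encode_nil (h1 : S.card ≤ 1) : prufEncode S f = [] := by
  rw [prufEncode, dif_neg]
  rintro ⟨-, h2⟩; omega

/-- length and membership spec for the encoding. -/
theorem encode_spec (h : TreeFun S f) :
    (prufEncode S f).length = S.card - 1 ∧ ∀ x ∈ prufEncode S f, x ∈ S := by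
  classical
  suffices H : ∀ (n : ℕ) (S : Finset V) (f : V → V), S.card = n → TreeFun S f →
      (prufEncode S f).length = S.card - 1 ∧ ∀ x ∈ prufEncode S f, x ∈ S from
    H S.card S f rfl h
  clear h
  intro n
  induction n using Nat.strong_induction_on with
  | _ n IH =>
  rintro S f rfl h
  obtain ⟨r, hr⟩ := h.exists_root
  rcases le_or_gt S.card 1 with h1 | h1
  · rw [encode_nil h1]
    constructor
    · simp; omega
    · simp
  · obtain ⟨hne, hcons⟩ := h.encode_cons hr h1
    set l := (S \ S.image f).min' hne with hldef
    obtain ⟨hne', hlS, hlim, hlr⟩ := h.leaf_spec hr h1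
    rw [← hldef] at hlS hlim hlr
    obtain ⟨h', hr'⟩ := h.erase_leaf hr hlS hlim
    have hcard : (S.erase l).card < S.card := Finset.card_erase_lt_of_mem hlS
    obtain ⟨ih1, ih2⟩ := IH (S.erase l).card hcard (S.erase l) _ rfl h' 
    rw [hcons]
    constructor
    · simp only [List.length_cons, ih1, Finset.card_erase_of_mem hlS]
      omega
    · intro x hx
      rcases List.mem_cons.mp hx with rfl | hx
      · exact h.mem_of_mem hr hlS
      · exact Finset.mem_of_mem_erase (ih2 x hx)

/-- image of update over `S` -/
theorem image_update_eq {g : V → V} {l a : V} (hlS : l ∈ S) :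
    S.image (Function.update g l a) = insert a ((S.erase l).image g) := by
  classical
  ext x
  simp only [Finset.mem_image, Finset.mem_insert, Finset.mem_erase]
  constructor
  · rintro ⟨v, hv, rfl⟩
    rcases eq_or_ne v l with rfl | hvl
    · left; simp
    · right; exact ⟨v, ⟨hvl, hv⟩, (Function.update_of_ne hvl _ _).symm ▸ rfl⟩
  · rintro (rfl | ⟨v, ⟨hvl, hv⟩, rfl⟩)
    · exact ⟨l, hlS, by simp⟩
    · exact ⟨v, hv, Function.update_of_ne hvl _ _⟩

/-- the entries of the code are exactly the image of `f` on `S` (when `2 ≤ #S`). -/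
theorem encode_toFinset (h : TreeFun S f) (h2 : 2 ≤ S.card) :
    (prufEncode S f).toFinset = S.image f := by
  classical
  suffices H : ∀ (n : ℕ) (S : Finset V) (f : V → V), S.card = n → TreeFun S f →
      2 ≤ S.card → (prufEncode S f).toFinset = S.image f from H S.card S f rfl h h2
  clear h h2
  intro n
  induction n using Nat.strong_induction_on with
  | _ n IH =>
  rintro S f rfl h h2
  obtain ⟨r, hr⟩ := h.exists_root
  obtain ⟨hne, hcons⟩ := h.encode_cons hr h2
  set l := (S \ S.image f).min' hne with hldef
  obtain ⟨hne', hlS, hlim, hlr⟩ := h.leaf_spec hr h2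
  obtain ⟨h', hr'⟩ := h.erase_leaf hr hlS hlim
  have hcard : (S.erase l).card < S.card := Finset.card_erase_lt_of_mem hlS
  have himg : S.image f = insert (f l) ((S.erase l).image (Function.update f l l)) := by
    have : S.image f = S.image (Function.update (Function.update f l l) l (f l)) := by
      apply Finset.image_congr
      intro v hv
      rcases eq_or_ne v l with rfl | hvl
      · simp
      · rw [Function.update_of_ne hvl, Function.update_of_ne hvl]
    rw [this, image_update_eq hlS]
  rw [hcons, List.toFinset_cons, himg]
  rcases le_or_gt 2 (S.erase l).card with h2' | h2'
  · rw [IH (S.erase l).card hcard (S.erase l) _ rfl h' h2']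
  · have hcard1 : (S.erase l).card = 1 := by
      have : 1 ≤ (S.erase l).card := Finset.card_pos.mpr ⟨r, hr'.mem⟩
      omega
    have hSerase : S.erase l = {r} := by
      obtain ⟨x, hx⟩ := Finset.card_eq_one.mp hcard1
      have := hr'.mem
      rw [hx, Finset.mem_singleton] at this
      rw [hx, this]
    have hfl : f l = r := by
      have h1 : f l ∈ S := h.mem_of_mem hr hlS
      have h2'' : f l ≠ l := fun he => hlim (Finset.mem_image.mpr ⟨l, hlS, he⟩)
      have : f l ∈ S.erase l := Finset.mem_erase.mpr ⟨h2'', h1⟩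
      rw [hSerase, Finset.mem_singleton] at this
      exact this
    rw [encode_nil (le_of_eq hcard1), hSerase, Finset.image_singleton,
      Function.update_of_ne (fun he : r = l => hlr he.symm), hr.fix, hfl]
    simp

end TreeFun

end Pruf
section Pruf2

variable {V : Type*} [Fintype V] [LinearOrder V]

namespace TreeFun

theorem decode_tree : ∀ (l : List V) (S : Finset V), S.Nonempty →
    l.length = S.card - 1 → (∀ x ∈ l, x ∈ S) → TreeFun S (prufDecode S l)
  | [], S, hS, hlen, hmem => by
    obtain ⟨r, hr⟩ := hS
    have hcard : S.card = 1 := by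
      have : 1 ≤ S.card := Finset.card_pos.mpr ⟨r, hr⟩
      simp at hlen; omega
    obtain ⟨x, hx⟩ := Finset.card_eq_one.mp hcard
    refine ⟨fun v hv => rfl, x, ?_, rfl, ?_⟩
    · rw [hx]; exact Finset.mem_singleton_self x
    · intro v hv
      rw [hx, Finset.mem_singleton] at hv
      exact ⟨0, hv⟩
  | a :: l, S, hS, hlen, hmem => by
    classical
    have hSub : (a :: l).toFinset ⊆ S := by
      intro x hx; exact hmem x (List.mem_toFinset.mp hx)
    have hcard2 : 2 ≤ S.card := by
      simp only [List.length_cons] at hlen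
      have : 1 ≤ S.card := Finset.card_pos.mpr hS
      omega
    have hne : (S \ (a :: l).toFinset).Nonempty := by
      rw [Finset.sdiff_nonempty]
      intro hcon
      have h1 : S.card ≤ (a :: l).toFinset.card := Finset.card_le_card hcon
      have h2 : (a :: l).toFinset.card ≤ (a :: l).length := (a :: l).toFinset_card_le
      simp only [List.length_cons] at h2 hlen
      omega
    set m := (S \ (a :: l).toFinset).min' hne with hm
    have hmmem := (S \ (a :: l).toFinset).min'_mem hne
    rw [Finset.mem_sdiff] at hmmem
    obtain ⟨hmS, hmnot⟩ := hmmem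
    have hma : m ≠ a := fun he => hmnot (by rw [← hm, he]; simp)
    have hml : m ∉ l := fun he => hmnot (by rw [← hm]; simp [he])
    have haS : a ∈ S := hmem a (by simp)
    have haE : a ∈ S.erase m := Finset.mem_erase.mpr ⟨hma.symm, haS⟩
    have hEcard : (S.erase m).card = S.card - 1 := Finset.card_erase_of_mem hmS
    have hEne : (S.erase m).Nonempty := by
      rw [← Finset.card_pos, hEcard]; omega
    have hlmem : ∀ x ∈ l, x ∈ S.erase m := by
      intro x hx
      exact Finset.mem_erase.mpr ⟨fun he => hml (he ▸ hx), hmem x (by simp [hx])⟩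
    have hllen : l.length = (S.erase m).card - 1 := by
      simp only [List.length_cons] at hlen; omega
    have ih : TreeFun (S.erase m) (prufDecode (S.erase m) l) :=
      decode_tree l (S.erase m) hEne hllen hlmem
    obtain ⟨r, hr⟩ := ih.exists_root
    set f' := prufDecode (S.erase m) l with hf'
    have hdec : prufDecode S (a :: l) = Function.update f' m a := by
      rw [prufDecode, dif_pos hne]
    rw [hdec]
    have hrm : r ≠ m := fun he => (Finset.mem_erase.mp (he ▸ hr.mem)).1 rfl
    have avoid : ∀ v ∈ S.erase m, ∀ j, (Function.update f' m a)^[j] v = f'^[j] v := by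
      intro v hv
      apply iterate_update_of_ne
      intro j
      exact fun he => (Finset.mem_erase.mp (he ▸ ih.iterate_mem hr hv j)).1 rfl
    refine ⟨?_, r, Finset.mem_of_mem_erase hr.mem, ?_, ?_⟩
    · intro v hv
      have hvm : v ≠ m := fun he => hv (he ▸ hmS)
      rw [Function.update_of_ne hvm]
      exact ih.outside v (fun hcon => hv (Finset.mem_of_mem_erase hcon))
    · rw [Function.update_of_ne hrm, hr.fix]
    · intro v hv
      rcases eq_or_ne v m with rfl | hvm
      · obtain ⟨k, hk⟩ := hr.reach a haE
        refine ⟨k + 1, ?_⟩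
        rw [Function.iterate_succ_apply, Function.update_self, avoid a haE k, hk]
      · obtain ⟨k, hk⟩ := hr.reach v (Finset.mem_erase.mpr ⟨hvm, hv⟩)
        exact ⟨k, by rw [avoid v (Finset.mem_erase.mpr ⟨hvm, hv⟩) k, hk]⟩

theorem image_decode : ∀ (l : List V) (S : Finset V), S.Nonempty →
    l.length = S.card - 1 → (∀ x ∈ l, x ∈ S) → l ≠ [] →
    S.image (prufDecode S l) = l.toFinset
  | [], _, _, _, _, hne => absurd rfl hne
  | a :: l, S, hS, hlen, hmem, _ => by
    classical
    -- replay the same setting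
    have hcard2 : 2 ≤ S.card := by
      simp only [List.length_cons] at hlen
      have : 1 ≤ S.card := Finset.card_pos.mpr hS
      omega
    have hne : (S \ (a :: l).toFinset).Nonempty := by
      rw [Finset.sdiff_nonempty]
      intro hcon
      have h1 : S.card ≤ (a :: l).toFinset.card := Finset.card_le_card hcon
      have h2 : (a :: l).toFinset.card ≤ (a :: l).length := (a :: l).toFinset_card_le
      simp only [List.length_cons] at h2 hlen
      omega
    set m := (S \ (a :: l).toFinset).min' hne with hm
    have hmmem := (S \ (a :: l).toFinset).min'_mem hne
    rw [Finset.mem_sdiff] at hmmem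
    obtain ⟨hmS, hmnot⟩ := hmmem
    have hma : m ≠ a := fun he => hmnot (by rw [← hm, he]; simp)
    have hml : m ∉ l := fun he => hmnot (by rw [← hm]; simp [he])
    have haS : a ∈ S := hmem a (by simp)
    have haE : a ∈ S.erase m := Finset.mem_erase.mpr ⟨hma.symm, haS⟩
    have hEcard : (S.erase m).card = S.card - 1 := Finset.card_erase_of_mem hmS
    have hEne : (S.erase m).Nonempty := by
      rw [← Finset.card_pos, hEcard]; omega
    have hlmem : ∀ x ∈ l, x ∈ S.erase m := by
      intro x hx
      exact Finset.mem_erase.mpr ⟨fun he => hml (he ▸ hx), hmem x (by simp [hx])⟩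
    have hllen : l.length = (S.erase m).card - 1 := by
      simp only [List.length_cons] at hlen; omega
    set f' := prufDecode (S.erase m) l with hf'
    have hdec : prufDecode S (a :: l) = Function.update f' m a := by
      rw [prufDecode, dif_pos hne]
    rw [hdec, image_update_eq hmS]
    rcases List.eq_nil_or_concat' l with rfl | hlne
    case inl =>
      -- `S.erase m` is a singleton and `f' = id`, with `a` its element
      have hcard1 : (S.erase m).card = 1 := by
        simp only [List.length_cons, List.length_nil] at hlen; omega
      obtain ⟨x, hx⟩ := Finset.card_eq_one.mp hcard1
      have hax : a = x := by
        have := haE; rw [hx, Finset.mem_singleton] at this; exact this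
      rw [hx, hf']
      simp [prufDecode, hax]
    case inr =>
      have hl0 : l ≠ [] := by rintro rfl; obtain ⟨_, _, h⟩ := hlne; simp at h
      conv_rhs => rw [List.toFinset_cons]
      congr 1
      exact image_decode l (S.erase m) hEne hllen hlmem hl0

end TreeFun

end Pruf2
section Pruf3

variable {V : Type*} [Fintype V] [LinearOrder V]

namespace TreeFun

theorem Finset.min'_congr' {α : Type*} [LinearOrder α] {s t : Finset α} (h : s = t)
    (hs : s.Nonempty) (ht : t.Nonempty) : s.min' hs = t.min' ht := by subst h; rfl

theorem decode_encode {S : Finset V} {f : V → V} (h : TreeFun S f) :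
    prufDecode S (prufEncode S f) = f := by
  classical
  suffices H : ∀ (n : ℕ) (S : Finset V) (f : V → V), S.card = n → TreeFun S f →
      prufDecode S (prufEncode S f) = f from H S.card S f rfl h
  clear h
  intro n
  induction n using Nat.strong_induction_on with
  | _ n IH =>
  rintro S f rfl h
  obtain ⟨r, hr⟩ := h.exists_root
  rcases le_or_gt S.card 1 with h1 | h1
  · have hcard : S.card = 1 := by
      have : 1 ≤ S.card := Finset.card_pos.mpr h.nonempty
      omega
    obtain ⟨x, hx⟩ := Finset.card_eq_one.mp hcard
    rw [encode_nil h1]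
    funext v
    rcases eq_or_ne v r with rfl | hvr
    · simpa [prufDecode] using hr.fix.symm
    · have hvS : v ∉ S := by
        intro hvS
        apply hvr
        have hra : r = x := by have := hr.mem; rwa [hx, Finset.mem_singleton] at this
        have hva : v = x := by rwa [hx, Finset.mem_singleton] at hvS
        rw [hva, hra]
      simpa [prufDecode] using (h.outside v hvS).symm
  · obtain ⟨hne, hcons⟩ := h.encode_cons hr h1
    set l := (S \ S.image f).min' hne with hldef
    obtain ⟨hne', hlS, hlim, hlr⟩ := h.leaf_spec hr h1
    obtain ⟨h', hr'⟩ := h.erase_leaf hr hlS hlim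
    have hcard : (S.erase l).card < S.card := Finset.card_erase_lt_of_mem hlS
    have htoF : (f l :: prufEncode (S.erase l) (Function.update f l l)).toFinset
        = S.image f := by
      rw [← hcons]; exact h.encode_toFinset h1
    rw [hcons, prufDecode]
    have hne2 : (S \ (f l :: prufEncode (S.erase l)
        (Function.update f l l)).toFinset).Nonempty := by
      rw [htoF]; exact hne
    rw [dif_pos hne2]
    have hmin : (S \ (f l :: prufEncode (S.erase l)
        (Function.update f l l)).toFinset).min' hne2 = l :=
      Finset.min'_congr' (by rw [htoF]) hne2 hne
    rw [hmin, IH (S.erase l).card hcard (S.erase l) _ rfl h',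
      Function.update_idem, Function.update_eq_self]

theorem encode_decode : ∀ (l : List V) (S : Finset V), S.Nonempty →
    l.length = S.card - 1 → (∀ x ∈ l, x ∈ S) →
    prufEncode S (prufDecode S l) = l
  | [], S, hS, hlen, hmem => by
    have hcard : S.card ≤ 1 := by simp at hlen; omega
    rw [encode_nil hcard]
  | a :: l, S, hS, hlen, hmem => by
    classical
    have hcard2 : 2 ≤ S.card := by
      simp only [List.length_cons] at hlen
      have : 1 ≤ S.card := Finset.card_pos.mpr hS
      omega
    have hne : (S \ (a :: l).toFinset).Nonempty := by
      rw [Finset.sdiff_nonempty]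
      intro hcon
      have h1 : S.card ≤ (a :: l).toFinset.card := Finset.card_le_card hcon
      have h2 : (a :: l).toFinset.card ≤ (a :: l).length := (a :: l).toFinset_card_le
      simp only [List.length_cons] at h2 hlen
      omega
    set m := (S \ (a :: l).toFinset).min' hne with hm
    have hmmem := (S \ (a :: l).toFinset).min'_mem hne
    rw [Finset.mem_sdiff] at hmmem
    obtain ⟨hmS, hmnot⟩ := hmmem
    have hma : m ≠ a := fun he => hmnot (by rw [← hm, he]; simp)
    have hml : m ∉ l := fun he => hmnot (by rw [← hm]; simp [he])
    have haS : a ∈ S := hmem a (by simp)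
    have haE : a ∈ S.erase m := Finset.mem_erase.mpr ⟨hma.symm, haS⟩
    have hEcard : (S.erase m).card = S.card - 1 := Finset.card_erase_of_mem hmS
    have hEne : (S.erase m).Nonempty := by
      rw [← Finset.card_pos, hEcard]; omega
    have hlmem : ∀ x ∈ l, x ∈ S.erase m := by
      intro x hx
      exact Finset.mem_erase.mpr ⟨fun he => hml (he ▸ hx), hmem x (by simp [hx])⟩
    have hllen : l.length = (S.erase m).card - 1 := by
      simp only [List.length_cons] at hlen; omega
    set f' := prufDecode (S.erase m) l with hf'
    have hdec : prufDecode S (a :: l) = Function.update f' m a := by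
      rw [prufDecode, dif_pos hne]
    set f := Function.update f' m a with hfdef
    have hTree : TreeFun S f := by
      rw [← hdec]
      exact decode_tree (a :: l) S hS hlen hmem
    obtain ⟨r, hrT⟩ := hTree.exists_root
    have himg : S.image f = (a :: l).toFinset := by
      rw [← hdec]
      exact image_decode (a :: l) S hS hlen hmem (by simp)
    obtain ⟨hneF, hconsF⟩ := hTree.encode_cons hrT hcard2
    have hminF : (S \ S.image f).min' hneF = m :=
      Finset.min'_congr' (by rw [himg]) hneF hne
    rw [hdec, hconsF, hminF]
    have hfm : f m = a := by rw [hfdef, Function.update_self]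
    have hupd : Function.update f m m = f' := by
      rw [hfdef, Function.update_idem]
      have : f' m = m := by
        refine (decode_tree l (S.erase m) hEne hllen hlmem).outside m ?_
        simp
      have h2 := Function.update_eq_self m f'
      rwa [this] at h2
    rw [hfm, hupd, encode_decode l (S.erase m) hEne hllen hlmem]

end TreeFun

end Pruf3
section Count

variable {V : Type*} [Fintype V] [LinearOrder V]

/-- The Prüfer bijection as an equivalence. -/
noncomputable def prufEquiv (S : Finset V) (hS : S.Nonempty) :
    {f : V → V // TreeFun S f} ≃
      {l : List V // l.length = S.card - 1 ∧ ∀ x ∈ l, x ∈ S} where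
  toFun := fun ⟨f, h⟩ => ⟨prufEncode S f, h.encode_spec⟩
  invFun := fun ⟨l, h⟩ => ⟨prufDecode S l, TreeFun.decode_tree l S hS h.1 h.2⟩
  left_inv := fun ⟨f, h⟩ => Subtype.ext h.decode_encode
  right_inv := fun ⟨l, h⟩ => Subtype.ext (TreeFun.encode_decode l S hS h.1 h.2)

noncomputable def listEquiv (S : Finset V) (k : ℕ) :
    {l : List V // l.length = k ∧ ∀ x ∈ l, x ∈ S} ≃ (Fin k → {x : V // x ∈ S}) where
  toFun := fun ⟨l, h1, h2⟩ i => ⟨l.get ⟨i, by rw [h1]; exact i.2⟩, h2 _ (l.get_mem _)⟩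
  invFun := fun g => ⟨List.ofFn (fun i => (g i).1), by simp, by
    intro x hx
    rw [List.mem_ofFn] at hx
    obtain ⟨i, rfl⟩ := hx
    exact (g i).2⟩
  left_inv := fun ⟨l, h1, h2⟩ => by
    apply Subtype.ext
    apply List.ext_get
    · simp [h1]
    · intro i hi1 hi2
      simp
  right_inv := fun g => by
    funext i
    apply Subtype.ext
    simp

theorem card_treeFun (S : Finset V) (hS : S.Nonempty) :
    Nat.card {f : V → V // TreeFun S f} = S.card ^ (S.card - 1) := by
  rw [Nat.card_congr ((prufEquiv S hS).trans (listEquiv S (S.card - 1)))]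
  simp [Nat.card_fun, Nat.card_eq_fintype_card, Fintype.card_coe]

end Count
section Graphs

open SimpleGraph

variable {V : Type*} [Fintype V] [LinearOrder V] [Nonempty V]

/-- `f` is the parent function of a tree rooted at `r` (on all of `V`). -/
def RootedFun (f : V → V) (r : V) : Prop :=
  f r = r ∧ ∀ v, ∃ k, f^[k] v = r

theorem RootedFun.treeFun {f : V → V} {r : V} (h : RootedFun f r) :
    TreeFun (Finset.univ : Finset V) f :=
  ⟨fun v hv => absurd (Finset.mem_univ v) hv,
    r, Finset.mem_univ r, h.1, fun v _ => h.2 v⟩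

theorem RootedFun.root {f : V → V} {r : V} (h : RootedFun f r) :
    TreeFun.Root (Finset.univ : Finset V) f r :=
  ⟨Finset.mem_univ r, h.1, fun v _ => h.2 v⟩

theorem RootedFun.apply_ne {f : V → V} {r : V} (h : RootedFun f r) {v : V} (hv : v ≠ r) :
    f v ≠ v :=
  h.treeFun.apply_ne h.root (Finset.mem_univ v) hv

theorem RootedFun.eq_root_of_iterate {f : V → V} {r : V} (h : RootedFun f r) {v : V}
    {j : ℕ} (hj : 0 < j) (hcyc : f^[j] v = v) : v = r :=
  h.treeFun.eq_root_of_iterate h.root (Finset.mem_univ v) hj hcyc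

/-- The graph associated to a parent function. -/
def funGraph (f : V → V) : SimpleGraph V where
  Adj v w := v ≠ w ∧ (f v = w ∨ f w = v)
  symm := ⟨fun v w h => ⟨h.1.symm, h.2.symm⟩⟩
  loopless := ⟨fun v h => h.1 rfl⟩

theorem funGraph_adj_parent {f : V → V} {r : V} (h : RootedFun f r) {v : V} (hv : v ≠ r) :
    (funGraph f).Adj v (f v) :=
  ⟨(h.apply_ne hv).symm, Or.inl rfl⟩

theorem funGraph_reachable {f : V → V} {r : V} (h : RootedFun f r) (v : V) :
    (funGraph f).Reachable v r := by
  obtain ⟨k, hk⟩ := h.2 v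
  induction k generalizing v with
  | zero => exact hk ▸ Reachable.refl v
  | succ k ih =>
      rcases eq_or_ne v r with rfl | hvr
      · exact Reachable.refl _
      · refine (funGraph_adj_parent h hvr).reachable.trans (ih (f v) ?_)
        rwa [← Function.iterate_succ_apply]

theorem funGraph_connected {f : V → V} {r : V} (h : RootedFun f r) :
    (funGraph f).Connected := by
  have : Nonempty V := ⟨r⟩
  exact Connected.mk (fun v w => (funGraph_reachable h v).trans (funGraph_reachable h w).symm)

theorem funGraph_bridge {f : V → V} {r : V} (h : RootedFun f r) {v : V} (hv : v ≠ r) :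
    (funGraph f).IsBridge s(v, f v) := by
  rw [isBridge_iff]
  intro hreach
  set G' := funGraph f \ fromEdgeSet {s(v, f v)} with hG'
  -- descendants of v
  set D : Set V := {u | ∃ k, f^[k] u = v} with hD
  have hclosed : ∀ u x, u ∈ D → G'.Adj u x → x ∈ D := by
    intro u x hu hadj
    rw [hG', sdiff_adj, fromEdgeSet_adj] at hadj
    obtain ⟨⟨hne, hor⟩, hnot⟩ := hadj
    rcases hor with hfu | hfx
    · -- x = f u
      rcases eq_or_ne u v with rfl | huv
      · exact absurd ⟨by rw [hfu]; exact Set.mem_singleton _, hne⟩ hnot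
      · obtain ⟨k, hk⟩ := hu
        rcases k with _ | k
        · exact absurd hk huv
        · rw [Function.iterate_succ_apply, hfu] at hk
          exact ⟨k, hk⟩
    · obtain ⟨k, hk⟩ := hu
      exact ⟨k + 1, by rw [Function.iterate_succ_apply, hfx]; exact hk⟩
  have hwalk : ∀ (u x : V) (_ : G'.Walk u x), u ∈ D → x ∈ D := by
    intro u x W
    induction W with
    | nil => exact id
    | cons hadj W ih => exact fun hu => ih (hclosed _ _ hu hadj)
  obtain ⟨W⟩ := hreach
  have hfvD : f v ∈ D := hwalk _ _ W ⟨0, rfl⟩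
  obtain ⟨k, hk⟩ := hfvD
  have : f^[k + 1] v = v := by rwa [Function.iterate_succ_apply]
  exact hv (h.eq_root_of_iterate (Nat.succ_pos k) this)

theorem funGraph_isTree {f : V → V} {r : V} (h : RootedFun f r) :
    (funGraph f).IsTree := by
  refine ⟨funGraph_connected h, ?_⟩
  rw [isAcyclic_iff_forall_adj_isBridge]
  intro v w hadj
  obtain ⟨hne, hor | hor⟩ := hadj
  · have hvr : v ≠ r := by rintro rfl; rw [h.1] at hor; exact hne hor
    rw [← hor]; exact funGraph_bridge h hvr
  · have hwr : w ≠ r := by rintro rfl; rw [h.1] at hor; exact hne hor.symm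
    rw [Sym2.eq_swap, ← hor]; exact funGraph_bridge h hwr

end Graphs
section Parent

open SimpleGraph Walk

variable {V : Type*} [Fintype V] [LinearOrder V] [Nonempty V]

noncomputable def thePath {G : SimpleGraph V} (hT : G.IsTree) (v r : V) : G.Walk v r :=
  Classical.choose (hT.existsUnique_path v r)

theorem thePath_isPath {G : SimpleGraph V} (hT : G.IsTree) (v r : V) :
    (thePath hT v r).IsPath :=
  (Classical.choose_spec (hT.existsUnique_path v r)).1

theorem thePath_unique {G : SimpleGraph V} (hT : G.IsTree) {v r : V} (q : G.Walk v r)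
    (hq : q.IsPath) : q = thePath hT v r :=
  (Classical.choose_spec (hT.existsUnique_path v r)).2 q hq

noncomputable def parentMap {G : SimpleGraph V} (hT : G.IsTree) (r : V) : V → V :=
  fun v => if v = r then r else (thePath hT v r).getVert 1

theorem parentMap_root {G : SimpleGraph V} (hT : G.IsTree) (r : V) :
    parentMap hT r r = r := if_pos rfl

theorem parentMap_eq {G : SimpleGraph V} (hT : G.IsTree) {r v : V} (hv : v ≠ r) :
    parentMap hT r v = (thePath hT v r).getVert 1 := if_neg hv

theorem parentMap_adj {G : SimpleGraph V} (hT : G.IsTree) {r v : V} (hv : v ≠ r) :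
    G.Adj v (parentMap hT r v) := by
  rw [parentMap_eq hT hv]
  exact Walk.adj_snd (Walk.not_nil_of_ne hv)

theorem parentMap_length {G : SimpleGraph V} (hT : G.IsTree) {r v : V} (hv : v ≠ r) :
    (thePath hT (parentMap hT r v) r).length + 1 = (thePath hT v r).length := by
  have hnil : ¬(thePath hT v r).Nil := Walk.not_nil_of_ne hv
  have h1 : (thePath hT v r).tail.IsPath := (thePath_isPath hT v r).tail
  have heq : parentMap hT r v = (thePath hT v r).getVert 1 := parentMap_eq hT hv
  have h2 := thePath_unique hT ((thePath hT v r).tail.copy heq.symm rfl) (by simpa using h1)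
  rw [← h2, Walk.length_copy, Walk.length_tail_add_one hnil]

theorem parentMap_reach {G : SimpleGraph V} (hT : G.IsTree) (r : V) (v : V) :
    ∃ k, (parentMap hT r)^[k] v = r := by
  suffices H : ∀ (n : ℕ) (v : V), (thePath hT v r).length = n →
      ∃ k, (parentMap hT r)^[k] v = r from H _ v rfl
  intro n
  induction n using Nat.strong_induction_on with
  | _ n IH =>
  intro v hlen
  rcases eq_or_ne v r with rfl | hvr
  · exact ⟨0, rfl⟩
  · have hlt : (thePath hT (parentMap hT r v) r).length < n := by
      have := parentMap_length hT hvr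
      omega
    obtain ⟨k, hk⟩ := IH _ hlt (parentMap hT r v) rfl
    exact ⟨k + 1, by rw [Function.iterate_succ_apply]; exact hk⟩

theorem parentMap_rooted {G : SimpleGraph V} (hT : G.IsTree) (r : V) :
    RootedFun (parentMap hT r) r :=
  ⟨parentMap_root hT r, parentMap_reach hT r⟩

/-- First round trip: rebuilding the graph from the parent map. -/
theorem funGraph_parentMap {G : SimpleGraph V} (hT : G.IsTree) (r : V) :
    funGraph (parentMap hT r) = G := by
  classical
  have hle : funGraph (parentMap hT r) ≤ G := by
    intro v w hadj
    obtain ⟨hne, hor | hor⟩ := hadj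
    · have hvr : v ≠ r := by
        rintro rfl; rw [parentMap_root] at hor; exact hne hor
      exact hor ▸ parentMap_adj hT hvr
    · have hwr : w ≠ r := by
        rintro rfl; rw [parentMap_root] at hor; exact hne hor.symm
      exact ((hor ▸ parentMap_adj hT hwr : G.Adj w v)).symm
  have hT' : (funGraph (parentMap hT r)).IsTree := funGraph_isTree (parentMap_rooted hT r)
  have hc1 := hT'.card_edgeFinset
  have hc2 := hT.card_edgeFinset
  rw [← SimpleGraph.edgeFinset_inj]
  refine Finset.eq_of_subset_of_card_le (SimpleGraph.edgeFinset_mono hle) (by omega)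

/-- Canonical walk from `v` to the root along `f`. -/
def fWalk {f : V → V} {r : V} (h : RootedFun f r) :
    ∀ (k : ℕ) (v : V), f^[k] v = r → (funGraph f).Walk v r
  | 0, v, hk => Walk.nil.copy rfl ((Function.iterate_zero_apply f v).symm.trans hk)
  | k + 1, v, hk =>
    if hv : v = r then Walk.nil.copy rfl hv
    else Walk.cons (funGraph_adj_parent h hv)
      (fWalk h k (f v) (by rwa [Function.iterate_succ_apply] at hk))

noncomputable def fht {f : V → V} {r : V} (h : RootedFun f r) (v : V) : ℕ :=
  Nat.find (h.2 v)

theorem fht_parent_lt {f : V → V} {r : V} (h : RootedFun f r) {v : V} (hv : v ≠ r) :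
    fht h (f v) < fht h v := by
  classical
  have hpos : 0 < fht h v := by
    rw [fht, Nat.find_pos]
    simpa using hv
  have hspec : f^[fht h v] v = r := Nat.find_spec (h.2 v)
  have h1 : f^[fht h v - 1] (f v) = r := by
    have h0 : f^[fht h v - 1 + 1] v = r := by
      rw [show fht h v - 1 + 1 = fht h v by omega]; exact hspec
    rwa [Function.iterate_succ_apply] at h0
  have h2 : fht h (f v) ≤ fht h v - 1 := Nat.find_le h1
  omega

theorem fWalk_support {f : V → V} {r : V} (h : RootedFun f r) :
    ∀ (k : ℕ) (v : V) (hk : f^[k] v = r), ∀ u ∈ (fWalk h k v hk).support, fht h u ≤ fht h v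
  | 0, v, hk => by
    intro u hu
    simp only [fWalk, Walk.support_copy, Walk.support_nil, List.mem_singleton] at hu
    exact hu ▸ le_refl _
  | k + 1, v, hk => by
    intro u hu
    by_cases hv : v = r
    · simp only [fWalk, dif_pos hv, Walk.support_copy, Walk.support_nil,
        List.mem_singleton] at hu
      exact hu ▸ le_refl _
    · simp only [fWalk, dif_neg hv, Walk.support_cons, List.mem_cons] at hu
      rcases hu with rfl | hu
      · exact le_refl _
      · exact le_trans (fWalk_support h k (f v) _ u hu) (le_of_lt (fht_parent_lt h hv))

theorem fWalk_isPath {f : V → V} {r : V} (h : RootedFun f r) :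
    ∀ (k : ℕ) (v : V) (hk : f^[k] v = r), (fWalk h k v hk).IsPath
  | 0, v, hk => by simp [fWalk]
  | k + 1, v, hk => by
    by_cases hv : v = r
    · simp [fWalk, dif_pos hv]
    · rw [show fWalk h (k+1) v hk = Walk.cons (funGraph_adj_parent h hv)
        (fWalk h k (f v) (by rwa [Function.iterate_succ_apply] at hk)) by
          simp [fWalk, dif_neg hv]]
      rw [Walk.cons_isPath_iff]
      refine ⟨fWalk_isPath h k (f v) _, fun hmem => ?_⟩
      have := fWalk_support h k (f v) _ v hmem
      exact absurd this (not_le.mpr (fht_parent_lt h hv))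

/-- Second round trip: the parent map of the graph of `f` is `f`. -/
theorem parentMap_funGraph {f : V → V} {r : V} (h : RootedFun f r) :
    parentMap (funGraph_isTree h) r = f := by
  funext v
  rcases eq_or_ne v r with rfl | hvr
  · rw [parentMap_root, h.1]
  · obtain ⟨k, hk⟩ := h.2 v
    rcases k with _ | k
    · exact absurd hk hvr
    · have hcons : fWalk h (k+1) v hk = Walk.cons (funGraph_adj_parent h hvr)
        (fWalk h k (f v) (by rwa [Function.iterate_succ_apply] at hk)) := by
        simp [fWalk, dif_neg hvr]
      have huniq := thePath_unique (funGraph_isTree h) (fWalk h (k+1) v hk)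
        (fWalk_isPath h (k+1) v hk)
      rw [parentMap_eq _ hvr, ← huniq, hcons, Walk.getVert_cons_succ, Walk.getVert_zero]

end Parent
section Final

open SimpleGraph

variable {V : Type*} [Fintype V] [LinearOrder V] [Nonempty V]

noncomputable def rootedTreeEquiv :
    {p : SimpleGraph V × V // p.1.IsTree} ≃ {q : (V → V) × V // RootedFun q.1 q.2} where
  toFun := fun p => ⟨(parentMap p.2 p.1.2, p.1.2), parentMap_rooted p.2 p.1.2⟩
  invFun := fun q => ⟨(funGraph q.1.1, q.1.2), funGraph_isTree q.2⟩
  left_inv := fun ⟨⟨G, r⟩, hT⟩ => Subtype.ext (Prod.ext (funGraph_parentMap hT r) rfl)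
  right_inv := fun ⟨⟨f, r⟩, hq⟩ => Subtype.ext (Prod.ext (parentMap_funGraph hq) rfl)

noncomputable def rootedFunEquiv :
    {q : (V → V) × V // RootedFun q.1 q.2} ≃ {f : V → V // TreeFun (Finset.univ : Finset V) f} := by
  refine Equiv.ofBijective (fun q => ⟨q.1.1, q.2.treeFun⟩) ⟨?_, ?_⟩
  · rintro ⟨⟨f1, r1⟩, hq1⟩ ⟨⟨f2, r2⟩, hq2⟩ h
    have hf : f1 = f2 := congrArg Subtype.val h
    subst hf
    have hr : r1 = r2 := by
      obtain ⟨k, hk⟩ := hq2.2 r1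
      rw [Function.iterate_fixed hq1.1 k] at hk
      exact hk
    subst hr
    rfl
  · rintro ⟨f, hTF⟩
    obtain ⟨r, hr⟩ := hTF.exists_root
    exact ⟨⟨(f, r), hr.fix, fun v => hr.reach v (Finset.mem_univ v)⟩, rfl⟩

end Final

/-- The number of rooted labeled trees on `n + 1` vertices (a tree together with
a distinguished root vertex) equals `(n+1)^n`. -/
theorem rooted_trees_count (n : ℕ) :
    Nat.card {p : SimpleGraph (Fin (n + 1)) × Fin (n + 1) // p.1.IsTree}
      = (n + 1) ^ n := by
  rw [Nat.card_congr (rootedTreeEquiv.trans rootedFunEquiv),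
    card_treeFun Finset.univ Finset.univ_nonempty]
  simp
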